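/- Let Σ, Γ be finite types with decidable equality and let f : List Σ → List Γ be a regular function (in the padded-convolution sense). Then there exists a constant c : ℕ such that for every w : List Σ, (f w).length ≤ w.length + c. -/

import Mathlib

/-- `tuplefy w v` combines two words in parallel into a word of pairs of length
`max w.length v.length`, padding missing entries with `none`. -/
def tuplefy {A G : Type*} (w : List A) (v : List G) : List (Option A × Option G) :=
  (List.range (max w.length v.length)).map fun i => (w[i]?, v[i]?)

lemma filterMap_get?_range {A : Type*} (w : List A) (n : ℕ) :
    (List.range n).filterMap (fun i => w[i]?) = w.take n := by
  induction n with
  | zero => simp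
  | succ n ih =>
    rw [List.range_succ, List.filterMap_append, ih, List.take_succ]
    simp only [List.filterMap_cons, List.filterMap_nil]
    cases w[n]? <;> simp

lemma tuplefy_fst {A G : Type*} (w : List A) (v : List G) :
    (tuplefy w v).filterMap Prod.fst = w := by
  rw [tuplefy, List.filterMap_map]
  have h : (Prod.fst ∘ fun (i : ℕ) => ((w[i]? : Option A), (v[i]? : Option G))) = (fun i => w[i]?) := rfl
  rw [h, filterMap_get?_range, List.take_of_length_le (le_max_left _ _)]

/-- A regular function (in the padded-convolution sense) can increase
length by at most a fixed constant. -/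
theorem regular_length_bound {A G : Type*}
    [Fintype A] [DecidableEq A] [Fintype G] [DecidableEq G]
    (f : List A → List G)
    (hreg : ∃ (σ : Type) (_ : Fintype σ) (M : DFA (Option A × Option G) σ),
      M.accepts = { u : List (Option A × Option G) | ∃ w : List A, tuplefy w (f w) = u }) :
    ∃ c : ℕ, ∀ w : List A, (f w).length ≤ w.length + c := by
  obtain ⟨σ, hfin, M, hM⟩ := hreg
  refine ⟨Fintype.card σ, fun w => ?_⟩
  by_contra hcon
  push_neg at hcon
  set n := w.length with hn
  set c := Fintype.card σ with hc
  set u := tuplefy w (f w) with hu_def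
  have hu : u ∈ M.accepts := by rw [hM]; exact ⟨w, rfl⟩
  have hL : u.length = (f w).length := by
    simp only [hu_def, tuplefy, List.length_map, List.length_range]
    omega
  -- key: filterMap fst of any prefix of length ≥ n (and ≤ length u) is w
  have hA : ∀ k, n ≤ k → (u.take k).filterMap Prod.fst = w := by
    intro k hk
    rw [hu_def, tuplefy, ← List.map_take, List.take_range, List.filterMap_map]
    have h : (Prod.fst ∘ fun (i : ℕ) => ((w[i]? : Option A), ((f w)[i]? : Option G)))
        = (fun i => w[i]?) := rfl
    rw [h, filterMap_get?_range]
    refine List.take_of_length_le ?_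
    simp only [le_min_iff, ← hn]
    exact ⟨hk, by omega⟩
  -- core contradiction for ordered repeated states
  have key : ∀ k1 k2 : ℕ, k1 < k2 → k2 ≤ c →
      M.evalFrom M.start (u.take (n + k1)) = M.evalFrom M.start (u.take (n + k2)) → False := by
    intro k1 k2 hlt hk2 hst
    set u' := u.take (n + k1) ++ u.drop (n + k2) with hu'
    have hacc : u' ∈ M.accepts := by
      rw [DFA.mem_accepts] at hu ⊢
      have h1 : M.eval u = M.evalFrom (M.evalFrom M.start (u.take (n + k2))) (u.drop (n + k2)) := by
        conv_lhs => rw [show u = u.take (n + k2) ++ u.drop (n + k2) from (List.take_append_drop _ _).symm]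
        exact M.evalFrom_of_append _ _ _
      have h2 : M.eval u' = M.evalFrom (M.evalFrom M.start (u.take (n + k1))) (u.drop (n + k2)) :=
        M.evalFrom_of_append _ _ _
      rw [h2, hst, ← h1]; exact hu
    rw [hM] at hacc
    obtain ⟨w', hw'⟩ := hacc
    -- filterMap fst of u' is w
    have hdrop : (u.drop (n + k2)).filterMap Prod.fst = [] := by
      have h1 : w = w ++ (u.drop (n + k2)).filterMap Prod.fst := by
        conv_lhs => rw [← tuplefy_fst w (f w), ← hu_def,
          show u = u.take (n + k2) ++ u.drop (n + k2) from (List.take_append_drop _ _).symm,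
          List.filterMap_append, hA (n + k2) (by omega)]
      have h2 := congrArg List.length h1
      rw [List.length_append] at h2
      have h3 : ((u.drop (n + k2)).filterMap Prod.fst).length = 0 := by omega
      exact List.eq_nil_of_length_eq_zero h3
    have hfst : u'.filterMap Prod.fst = w := by
      rw [hu', List.filterMap_append, hA (n + k1) (by omega), hdrop, List.append_nil]
    have hw'w : w' = w := by
      rw [← tuplefy_fst w' (f w'), hw', hfst]
    rw [hw'w] at hw'
    -- so u' = u, but u' is strictly shorter
    have hlen : u'.length = u.length := by rw [← hw', ← hu_def]
    have hlen' : u'.length = (n + k1) + (u.length - (n + k2)) := by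
      rw [hu']
      simp only [List.length_append, List.length_take, List.length_drop]
      omega
    omega
  have hninj : ¬ Function.Injective
      (fun k : Fin (c + 1) => M.evalFrom M.start (u.take (n + k))) := by
    intro hinj
    have := Fintype.card_le_of_injective _ hinj
    simp [hc] at this
  rw [Function.not_injective_iff] at hninj
  obtain ⟨k1, k2, hst, hne⟩ := hninj
  rcases Nat.lt_or_ge (k1 : ℕ) (k2 : ℕ) with hlt | hge
  · exact key k1 k2 hlt (by omega) hst
  · have hlt : (k2 : ℕ) < (k1 : ℕ) := by
      rcases lt_or_eq_of_le hge with h | h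
      · exact h
      · exact absurd (Fin.ext h.symm) hne
    exact key k2 k1 hlt (by omega) hst.symm
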